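/- If F is union-closed, F_c ⊆ F, S = ⋃F_c, and K ∩ S = ∅, then the projection {A \ K. A ∈ hc(K,S) ∩ F} is union-closed and moreover closed under unions with members of F_c (i.e., unions of its members with members of F_c lie in it). -/
import Mathlib


variable {α : Type*} [DecidableEq α]

/-- A family is union-closed. -/
def UC (F : Finset (Finset α)) : Prop := ∀ A ∈ F, ∀ B ∈ F, A ∪ B ∈ F

/-- Number of members of `F` containing `a`. -/
def cnt (a : α) (F : Finset (Finset α)) : ℕ := (F.filter (fun A => a ∈ A)).card

/-- Union-ucClosure: all unions of nonempty subfamilies. -/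
def ucClosure (F : Finset (Finset α)) : Finset (Finset α) :=
  (F.powerset.filter (fun G => G.Nonempty)).image (fun G => G.sup id)

/-- FC-family. -/
def IsFC (Fc : Finset (Finset α)) : Prop :=
  ∀ F : Finset (Finset α), UC F → Fc ⊆ F →
    ∃ a ∈ Fc.sup id, 2 * cnt a F ≥ F.card

/-- The S-hypercube with base K. -/
def hc (K S : Finset α) : Finset (Finset α) :=
  (K ∪ S).powerset.filter (fun A => K ⊆ A)

theorem projection_uc_for (F Fc : Finset (Finset α)) (K S : Finset α)
    (hUC : UC F) (hsub : Fc ⊆ F) (hS : S = Fc.sup id) (hKS : K ∩ S = ∅) :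
    UC ((hc K S ∩ F).image (fun A => A \ K)) ∧
    (∀ A ∈ (hc K S ∩ F).image (fun A => A \ K), ∀ B ∈ Fc,
      A ∪ B ∈ (hc K S ∩ F).image (fun A => A \ K)) := by
  have hmem : ∀ A, A ∈ hc K S ∩ F ↔ (A ⊆ K ∪ S ∧ K ⊆ A ∧ A ∈ F) := by
    intro A
    rw [Finset.mem_inter, hc, Finset.mem_filter, Finset.mem_powerset, and_assoc]
  constructor
  · intro A hA B hB
    simp only [Finset.mem_image] at hA hB ⊢
    obtain ⟨A', hA', rfl⟩ := hA
    obtain ⟨B', hB', rfl⟩ := hB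
    rw [hmem] at hA' hB'
    refine ⟨A' ∪ B', ?_, by rw [Finset.union_sdiff_distrib]⟩
    rw [hmem]
    exact ⟨Finset.union_subset hA'.1 hB'.1, hA'.2.1.trans Finset.subset_union_left,
      hUC _ hA'.2.2 _ hB'.2.2⟩
  · intro A hA B hB
    simp only [Finset.mem_image] at hA ⊢
    obtain ⟨A', hA', rfl⟩ := hA
    rw [hmem] at hA'
    have hBS : B ⊆ S := by
      rw [hS]; exact Finset.le_sup (f := id) hB
    have hBK : B \ K = B := by
      apply Finset.sdiff_eq_self_of_disjoint
      rw [Finset.disjoint_right]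
      intro a haK haB
      have : a ∈ K ∩ S := Finset.mem_inter.mpr ⟨haK, hBS haB⟩
      simp [hKS] at this
    refine ⟨A' ∪ B, ?_, by rw [Finset.union_sdiff_distrib, hBK]⟩
    rw [hmem]
    exact ⟨Finset.union_subset hA'.1 (hBS.trans Finset.subset_union_right),
      hA'.2.1.trans Finset.subset_union_left,
      hUC _ hA'.2.2 _ (hsub hB)⟩
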